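/- For λ ∈ (0,1], the second moment of μ_λ equals 1 + λ. -/

import Mathlib

open Real MeasureTheory

theorem stmt_2 (lam : ℝ) (hlam : lam ∈ Set.Ioc (0:ℝ) 1) :
    ∫ x in Set.Icc ((1 - Real.sqrt lam)^2) ((1 + Real.sqrt lam)^2),
      x^2 * (Real.sqrt (4 * lam - (x - 1 - lam)^2) / (2 * Real.pi * lam * x)) = 1 + lam := by
  obtain ⟨h0, h1⟩ := hlam
  set s := Real.sqrt lam with hsdef
  clear_value s
  have hs : 0 < s := hsdef ▸ Real.sqrt_pos.mpr h0
  have hs2 : s ^ 2 = lam := hsdef ▸ Real.sq_sqrt h0.le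
  have hle : (1 - s) ^ 2 ≤ (1 + s) ^ 2 := by nlinarith
  have hπ : (0:ℝ) < Real.pi := Real.pi_pos
  -- step 1: rewrite as integral over Ioc and simplify integrand
  rw [MeasureTheory.integral_Icc_eq_integral_Ioc]
  rw [MeasureTheory.setIntegral_congr_fun (g := fun x =>
      x * Real.sqrt (4 * lam - (x - 1 - lam) ^ 2) / (2 * Real.pi * lam)) measurableSet_Ioc
      (by
        intro x hx
        have hx0 : 0 < x := lt_of_le_of_lt (sq_nonneg (1 - s)) hx.1
        field_simp)]
  rw [← intervalIntegral.integral_of_le hle]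
  -- step 2: substitution x = 2s*t + (1+lam)
  have key := intervalIntegral.smul_integral_comp_mul_add
    (f := fun x => x * Real.sqrt (4 * lam - (x - 1 - lam) ^ 2) / (2 * Real.pi * lam))
    (a := (-1:ℝ)) (b := 1) (2 * s) (1 + lam)
  have ha : 2 * s * (-1) + (1 + lam) = (1 - s) ^ 2 := by nlinarith
  have hb : 2 * s * 1 + (1 + lam) = (1 + s) ^ 2 := by nlinarith
  rw [ha, hb] at key
  rw [← key]
  -- step 3: simplify the integrand in t
  have hinteq : ∀ t : ℝ, (2 * s * t + (1 + lam)) *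
      Real.sqrt (4 * lam - (2 * s * t + (1 + lam) - 1 - lam) ^ 2) / (2 * Real.pi * lam)
      = (2 * s * t + (1 + lam)) * (2 * s * Real.sqrt (1 - t ^ 2)) / (2 * Real.pi * lam) := by
    intro t
    have h1 : 4 * lam - (2 * s * t + (1 + lam) - 1 - lam) ^ 2 = 4 * lam * (1 - t ^ 2) := by
      nlinarith [sq_nonneg t]
    have h2 : Real.sqrt (4 * lam * (1 - t ^ 2)) = 2 * s * Real.sqrt (1 - t ^ 2) := by
      rw [Real.sqrt_mul (by positivity)]
      have : Real.sqrt (4 * lam) = 2 * s := by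
        rw [show (4:ℝ) * lam = (2 * s) ^ 2 by nlinarith, Real.sqrt_sq (by positivity)]
      rw [this]
    rw [h1, h2]
  simp only [hinteq]
  -- step 4: split the integral
  have hc1 : Continuous fun t : ℝ => t * Real.sqrt (1 - t ^ 2) := by
    exact continuous_id.mul ((continuous_const.sub (continuous_pow 2)).sqrt)
  have hc2 : Continuous fun t : ℝ => Real.sqrt (1 - t ^ 2) :=
    (continuous_const.sub (continuous_pow 2)).sqrt
  have hodd : (∫ t in (-1:ℝ)..1, t * Real.sqrt (1 - t ^ 2)) = 0 := by
    have h := intervalIntegral.integral_comp_neg (a := (-1:ℝ)) (b := 1)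
      (fun t => t * Real.sqrt (1 - t ^ 2))
    simp only [neg_neg, neg_one_sq] at h
    have h' : (∫ t in (-1:ℝ)..1, -t * Real.sqrt (1 - (-t) ^ 2))
        = ∫ t in (-1:ℝ)..1, -(t * Real.sqrt (1 - t ^ 2)) := by
      congr 1; funext t; ring_nf
    rw [h'] at h
    rw [intervalIntegral.integral_neg] at h
    linarith
  have hsq : (∫ t in (-1:ℝ)..1, Real.sqrt (1 - t ^ 2)) = Real.pi / 2 :=
    integral_sqrt_one_sub_sq
  have hsplit : (∫ t in (-1:ℝ)..1,
      (2 * s * t + (1 + lam)) * (2 * s * Real.sqrt (1 - t ^ 2)) / (2 * Real.pi * lam))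
      = (s / (Real.pi * lam)) *
        ((2 * s) * (∫ t in (-1:ℝ)..1, t * Real.sqrt (1 - t ^ 2))
          + (1 + lam) * (∫ t in (-1:ℝ)..1, Real.sqrt (1 - t ^ 2))) := by
    have heq : (∫ t in (-1:ℝ)..1,
        (2 * s * t + (1 + lam)) * (2 * s * Real.sqrt (1 - t ^ 2)) / (2 * Real.pi * lam))
        = ∫ t in (-1:ℝ)..1,
          ((s / (Real.pi * lam)) * (2 * s)) * (t * Real.sqrt (1 - t ^ 2))
            + ((s / (Real.pi * lam)) * (1 + lam)) * Real.sqrt (1 - t ^ 2) := by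
      congr 1
      funext t
      field_simp
    rw [heq, intervalIntegral.integral_add
        ((show Continuous fun t : ℝ => (s / (Real.pi * lam) * (2 * s)) * (t * Real.sqrt (1 - t ^ 2)) from continuous_const.mul hc1).intervalIntegrable _ _)
        ((show Continuous fun t : ℝ => (s / (Real.pi * lam) * (1 + lam)) * Real.sqrt (1 - t ^ 2) from continuous_const.mul hc2).intervalIntegrable _ _),
      intervalIntegral.integral_const_mul, intervalIntegral.integral_const_mul]
    ring
  rw [hsplit, hodd, hsq]
  have hπ0 : Real.pi ≠ 0 := ne_of_gt hπ
  have hlam0 : lam ≠ 0 := ne_of_gt h0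
  simp only [smul_eq_mul, mul_zero, zero_add]
  field_simp
  rw [← hs2]
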